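/- Let γ : [0, ∞) → ℝ be a differentiable function satisfying dγ/dt = -sin(γ) sin(π/4 - 2γ) cos(γ + π/4) with 0 < γ(0) < π/4. Then 0 < γ(t) < π/4 for all t ≥ 0, and: (a) if γ(0) < π/8 then γ is decreasing, γ(t) → 0 as t → ∞, and moreover there exists a constant c > 0 (depending on γ(0)) such that γ(t) ≤ γ(0)·e^{-ct} for all t ≥ 0; (b) if γ(0) > π/8 then γ(t) → π/4 as t → ∞; (c) if γ(0) = π/8 then γ(t) = π/8 for all t. -/

import Mathlib

open Real Filter Set

noncomputable def Fode (x : ℝ) : ℝ :=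
  -(Real.sin x * Real.sin (π / 4 - 2 * x) * Real.cos (x + π / 4))

lemma Fode_abs_aux {x b c : ℝ} (hb : |b| ≤ 1) (hc : |c| ≤ 1) :
    |(-(x * b * c))| ≤ |x| := by
  rw [abs_neg, abs_mul, abs_mul]
  calc |x| * |b| * |c| ≤ |x| * 1 * 1 :=
        mul_le_mul (mul_le_mul le_rfl hb (abs_nonneg _) (abs_nonneg _)) hc (abs_nonneg _)
          (by positivity)
    _ = |x| := by ring

lemma Fode_abs0 (x : ℝ) : |Fode x| ≤ 2 * |x - 0| := by
  have h1 : |Real.sin x| ≤ |x| := Real.abs_sin_le_abs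
  rw [sub_zero]
  calc |Fode x| ≤ |Real.sin x| := by
        have h : Fode x = -(Real.sin x * Real.sin (π / 4 - 2 * x) * Real.cos (x + π / 4)) := rfl
        rw [h]
        exact Fode_abs_aux (Real.abs_sin_le_one _) (Real.abs_cos_le_one (x + π / 4))
    _ ≤ |x| := h1
    _ ≤ 2 * |x| := by linarith [abs_nonneg x]

lemma Fode_abs8 (x : ℝ) : |Fode x| ≤ 2 * |x - π / 8| := by
  have key : Fode x = -(Real.sin (π / 4 - 2 * x) * Real.sin x * Real.cos (x + π / 4)) := by
    rw [Fode]; ring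
  have h1 : |Real.sin (π / 4 - 2 * x)| ≤ |π / 4 - 2 * x| := Real.abs_sin_le_abs
  calc |Fode x| ≤ |Real.sin (π / 4 - 2 * x)| := by
        rw [key]; exact Fode_abs_aux (Real.abs_sin_le_one _) (Real.abs_cos_le_one _)
    _ ≤ |π / 4 - 2 * x| := h1
    _ = 2 * |x - π / 8| := by
        rw [show π / 4 - 2 * x = (-2) * (x - π / 8) by ring, abs_mul]
        norm_num

lemma Fode_abs4 (x : ℝ) : |Fode x| ≤ 2 * |x - π / 4| := by
  have key : Fode x = -(Real.cos (x + π / 4) * Real.sin x * Real.sin (π / 4 - 2 * x)) := by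
    rw [Fode]; ring
  have hcs : Real.cos (x + π / 4) = Real.sin (π / 4 - x) := by
    rw [← Real.sin_pi_div_two_sub]; ring_nf
  calc |Fode x| ≤ |Real.cos (x + π / 4)| := by
        rw [key]; exact Fode_abs_aux (Real.abs_sin_le_one _) (Real.abs_sin_le_one _)
    _ = |Real.sin (π / 4 - x)| := by rw [hcs]
    _ ≤ |π / 4 - x| := Real.abs_sin_le_abs
    _ = |x - π / 4| := abs_sub_comm _ _
    _ ≤ 2 * |x - π / 4| := by linarith [abs_nonneg (x - π / 4)]

/-- Forward uniqueness at an equilibrium. -/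
lemma forward_eq {γ : ℝ → ℝ} {a t₀ : ℝ}
    (hode : ∀ t ∈ Set.Ici (0 : ℝ), HasDerivWithinAt γ (Fode (γ t)) (Set.Ici (0 : ℝ)) t)
    (habs : ∀ x, |Fode x| ≤ 2 * |x - a|)
    (ht₀ : 0 ≤ t₀) (ha : γ t₀ = a) : ∀ t, t₀ ≤ t → γ t = a := by
  intro T hT
  have hcont : ContinuousOn γ (Set.Ici 0) := fun t ht => (hode t ht).continuousWithinAt
  have hsub : Set.Icc t₀ T ⊆ Set.Ici (0 : ℝ) := fun x hx => le_trans ht₀ hx.1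
  have key := norm_le_gronwallBound_of_norm_deriv_right_le
    (f := fun t => γ t - a) (f' := fun t => Fode (γ t)) (δ := 0) (K := 2) (ε := 0)
    (a := t₀) (b := T)
    ((hcont.mono hsub).sub continuousOn_const)
    (fun x hx => ((hode x (le_trans ht₀ hx.1)).mono
      (Set.Ici_subset_Ici.2 (le_trans ht₀ hx.1))).sub_const a)
    (by simp [ha])
    (fun x hx => by simpa [Real.norm_eq_abs] using habs (γ x))
  have h2 := key T ⟨hT, le_refl T⟩
  rw [gronwallBound_ε0_δ0] at h2
  have h3 : |γ T - a| ≤ 0 := by simpa [Real.norm_eq_abs] using h2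
  have := abs_nonpos_iff.mp (h3)
  linarith [sub_eq_zero.mp this, this]

/-- Backward uniqueness at an equilibrium. -/
lemma backward_eq {γ : ℝ → ℝ} {a t₀ : ℝ}
    (hode : ∀ t ∈ Set.Ici (0 : ℝ), HasDerivWithinAt γ (Fode (γ t)) (Set.Ici (0 : ℝ)) t)
    (habs : ∀ x, |Fode x| ≤ 2 * |x - a|)
    (ht₀ : 0 ≤ t₀) (ha : γ t₀ = a) : γ 0 = a := by
  have hcont : ContinuousOn γ (Set.Ici 0) := fun t ht => (hode t ht).continuousWithinAt
  set η : ℝ → ℝ := fun s => γ (t₀ - s) with hη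
  have hmapsIcc : ∀ s : ℝ, Set.MapsTo (fun u => t₀ - u) (Set.Icc 0 t₀) (Set.Ici (0 : ℝ)) :=
    fun s u hu => by simpa using hu.2
  have hηcont : ContinuousOn η (Set.Icc 0 t₀) :=
    hcont.comp ((continuousOn_const).sub continuousOn_id) (hmapsIcc 0)
  have hηderiv : ∀ s ∈ Set.Ico 0 t₀, HasDerivWithinAt η (-(Fode (η s))) (Set.Ici s) s := by
    intro s hs
    have hlin : HasDerivWithinAt (fun u => t₀ - u) (-1 : ℝ) (Set.Icc s t₀) s :=
      ((hasDerivWithinAt_id s _).const_sub t₀)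
    have hmem : (0 : ℝ) ≤ t₀ - s := by linarith [hs.2.le]
    have hmaps : Set.MapsTo (fun u => t₀ - u) (Set.Icc s t₀) (Set.Ici (0 : ℝ)) :=
      fun u hu => by simpa using hu.2
    have hcomp := HasDerivWithinAt.comp s (hode (t₀ - s) hmem) hlin hmaps
    have h2 : HasDerivWithinAt η (-(Fode (γ (t₀ - s)))) (Set.Icc s t₀) s := by
      exact hcomp.congr_deriv (by ring)
    rw [← Set.Ici_inter_Iic] at h2
    exact (hasDerivWithinAt_inter (Iic_mem_nhds hs.2)).mp h2
  have key := norm_le_gronwallBound_of_norm_deriv_right_le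
    (f := fun s => η s - a) (f' := fun s => -(Fode (η s))) (δ := 0) (K := 2) (ε := 0)
    (a := 0) (b := t₀)
    (hηcont.sub continuousOn_const)
    (fun s hs => (hηderiv s hs).sub_const a)
    (by simp [hη, ha])
    (fun s hs => by simpa [Real.norm_eq_abs] using habs (η s))
  have h2 := key t₀ ⟨ht₀, le_refl t₀⟩
  rw [gronwallBound_ε0_δ0] at h2
  have h3 : |η t₀ - a| ≤ 0 := by simpa [Real.norm_eq_abs] using h2
  have h4 := sub_eq_zero.mp (abs_nonpos_iff.mp h3)
  simpa [hη] using h4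

lemma antitoneOn_aux {f f' : ℝ → ℝ}
    (hf : ∀ t ∈ Set.Ici (0 : ℝ), HasDerivWithinAt f (f' t) (Set.Ici (0 : ℝ)) t)
    (hneg : ∀ t ∈ Set.Ici (0 : ℝ), f' t ≤ 0) : AntitoneOn f (Set.Ici (0 : ℝ)) := by
  apply antitoneOn_of_deriv_nonpos (convex_Ici 0)
    (fun t ht => (hf t ht).continuousWithinAt)
  · rw [interior_Ici]
    exact fun t ht =>
      ((hf t (Set.mem_Ici.mpr (le_of_lt ht))).hasDerivAt (Ici_mem_nhds ht)).differentiableAt.differentiableWithinAt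
  · rw [interior_Ici]
    intro t ht
    rw [((hf t (Set.mem_Ici.mpr ht.le)).hasDerivAt (Ici_mem_nhds ht)).deriv]
    exact hneg t (Set.mem_Ici.mpr ht.le)

lemma monotoneOn_aux {f f' : ℝ → ℝ}
    (hf : ∀ t ∈ Set.Ici (0 : ℝ), HasDerivWithinAt f (f' t) (Set.Ici (0 : ℝ)) t)
    (hpos : ∀ t ∈ Set.Ici (0 : ℝ), 0 ≤ f' t) : MonotoneOn f (Set.Ici (0 : ℝ)) := by
  apply monotoneOn_of_deriv_nonneg (convex_Ici 0)
    (fun t ht => (hf t ht).continuousWithinAt)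
  · rw [interior_Ici]
    exact fun t ht =>
      ((hf t (Set.mem_Ici.mpr (le_of_lt ht))).hasDerivAt (Ici_mem_nhds ht)).differentiableAt.differentiableWithinAt
  · rw [interior_Ici]
    intro t ht
    rw [((hf t (Set.mem_Ici.mpr ht.le)).hasDerivAt (Ici_mem_nhds ht)).deriv]
    exact hpos t (Set.mem_Ici.mpr ht.le)

lemma exp_decay_aux {f f' : ℝ → ℝ} {c : ℝ}
    (hf : ∀ t ∈ Set.Ici (0 : ℝ), HasDerivWithinAt f (f' t) (Set.Ici (0 : ℝ)) t)
    (hb : ∀ t ∈ Set.Ici (0 : ℝ), f' t + c * f t ≤ 0) :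
    ∀ t ∈ Set.Ici (0 : ℝ), f t ≤ f 0 * Real.exp (-c * t) := by
  have hg : ∀ t ∈ Set.Ici (0 : ℝ), HasDerivWithinAt (fun t => f t * Real.exp (c * t))
      (f' t * Real.exp (c * t) + f t * (Real.exp (c * t) * (c * 1))) (Set.Ici (0 : ℝ)) t :=
    fun t ht => (hf t ht).mul (((hasDerivAt_id t).const_mul c).exp.hasDerivWithinAt)
  have anti := antitoneOn_aux hg (fun t ht => by
    nlinarith [mul_nonpos_of_nonpos_of_nonneg (hb t ht) (Real.exp_pos (c * t)).le])
  intro t ht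
  have h1 := anti (Set.self_mem_Ici) ht ht
  simp only [mul_zero, Real.exp_zero, mul_one] at h1
  have e := Real.exp_pos (c * t)
  rw [neg_mul, Real.exp_neg, ← div_eq_mul_inv, le_div_iff₀ e]
  exact h1

lemma exp_tendsto_aux {c : ℝ} (hc : 0 < c) (A : ℝ) :
    Filter.Tendsto (fun t => A * Real.exp (-c * t)) Filter.atTop (nhds 0) := by
  have h1 : Filter.Tendsto (fun t : ℝ => c * t) Filter.atTop Filter.atTop :=
    Filter.Tendsto.const_mul_atTop hc Filter.tendsto_id
  have h2 : Filter.Tendsto (fun t : ℝ => Real.exp (-(c * t))) Filter.atTop (nhds 0) :=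
    Real.tendsto_exp_neg_atTop_nhds_zero.comp h1
  have h3 := h2.const_mul A
  simpa [neg_mul] using h3

/-- for the reduced ODE `dγ/dt = -sin(γ) sin(π/4 - 2γ) cos(γ + π/4)`
with `0 < γ(0) < π/4`, the solution stays in `(0, π/4)`; if `γ(0) < π/8` it decreases
to `0` exponentially fast, if `γ(0) > π/8` it converges to `π/4`, and if `γ(0) = π/8`
it is constant. -/
theorem reduced_ode_cusping
    (γ : ℝ → ℝ)
    (hode : ∀ t ∈ Set.Ici (0 : ℝ), HasDerivWithinAt γ
      (-(Real.sin (γ t) * Real.sin (π / 4 - 2 * γ t) * Real.cos (γ t + π / 4)))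
      (Set.Ici (0 : ℝ)) t)
    (h0 : 0 < γ 0) (h1 : γ 0 < π / 4) :
    (∀ t ∈ Set.Ici (0 : ℝ), 0 < γ t ∧ γ t < π / 4) ∧
    (γ 0 < π / 8 →
      AntitoneOn γ (Set.Ici (0 : ℝ)) ∧
      Filter.Tendsto γ Filter.atTop (nhds 0) ∧
      ∃ c : ℝ, 0 < c ∧ ∀ t ∈ Set.Ici (0 : ℝ), γ t ≤ γ 0 * Real.exp (-c * t)) ∧
    (π / 8 < γ 0 → Filter.Tendsto γ Filter.atTop (nhds (π / 4))) ∧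
    (γ 0 = π / 8 → ∀ t ∈ Set.Ici (0 : ℝ), γ t = π / 8) := by
  have hπ := Real.pi_pos
  have hF : ∀ t ∈ Set.Ici (0 : ℝ), HasDerivWithinAt γ (Fode (γ t)) (Set.Ici (0 : ℝ)) t := hode
  have hcont : ContinuousOn γ (Set.Ici 0) := fun t ht => (hF t ht).continuousWithinAt
  have hb0 : ∀ t ∈ Set.Ici (0 : ℝ), γ t ≠ 0 := fun t ht h =>
    absurd (backward_eq hF Fode_abs0 ht h) h0.ne'
  have hb4 : ∀ t ∈ Set.Ici (0 : ℝ), γ t ≠ π / 4 := fun t ht h =>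
    absurd (backward_eq hF Fode_abs4 ht h) h1.ne
  have hmem : ∀ t ∈ Set.Ici (0 : ℝ), 0 < γ t ∧ γ t < π / 4 := by
    intro t ht
    have hsub : Set.Icc (0 : ℝ) t ⊆ Set.Ici 0 := fun x hx => hx.1
    constructor
    · by_contra h
      push_neg at h
      obtain ⟨s, hs, hgs⟩ := intermediate_value_Icc' ht (hcont.mono hsub)
        (Set.mem_Icc.mpr ⟨h, h0.le⟩)
      exact hb0 s (hsub hs) hgs
    · by_contra h
      push_neg at h
      obtain ⟨s, hs, hgs⟩ := intermediate_value_Icc ht (hcont.mono hsub)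
        (Set.mem_Icc.mpr ⟨h1.le, h⟩)
      exact hb4 s (hsub hs) hgs
  refine ⟨hmem, ?_, ?_, ?_⟩
  · -- case (a)
    intro ha
    have hb8 : ∀ t ∈ Set.Ici (0 : ℝ), γ t ≠ π / 8 := fun t ht h =>
      absurd (backward_eq hF Fode_abs8 ht h) (ne_of_lt ha)
    have hlt8 : ∀ t ∈ Set.Ici (0 : ℝ), γ t < π / 8 := by
      intro t ht
      by_contra h
      push_neg at h
      have hsub : Set.Icc (0 : ℝ) t ⊆ Set.Ici 0 := fun x hx => hx.1
      obtain ⟨s, hs, hgs⟩ := intermediate_value_Icc ht (hcont.mono hsub)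
        (Set.mem_Icc.mpr ⟨ha.le, h⟩)
      exact hb8 s (hsub hs) hgs
    have hsign : ∀ x : ℝ, 0 < x → x < π / 8 → Fode x ≤ 0 := by
      intro x hx hx8
      have s1 : 0 < Real.sin x := Real.sin_pos_of_pos_of_lt_pi hx (by linarith)
      have s2 : 0 ≤ Real.sin (π / 4 - 2 * x) :=
        Real.sin_nonneg_of_nonneg_of_le_pi (by linarith) (by linarith)
      have s3 : 0 < Real.cos (x + π / 4) :=
        Real.cos_pos_of_mem_Ioo ⟨by linarith, by linarith⟩
      rw [Fode]
      nlinarith [mul_nonneg (mul_nonneg s1.le s2) s3.le]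
    have anti : AntitoneOn γ (Set.Ici (0 : ℝ)) :=
      antitoneOn_aux hF (fun t ht => hsign _ (hmem t ht).1 (hlt8 t ht))
    have hs2 : 0 < Real.sin (π / 4 - 2 * γ 0) :=
      Real.sin_pos_of_pos_of_lt_pi (by linarith) (by linarith)
    have hs3 : 0 < Real.cos (γ 0 + π / 4) :=
      Real.cos_pos_of_mem_Ioo ⟨by linarith, by linarith⟩
    set c : ℝ := 2 / π * (Real.sin (π / 4 - 2 * γ 0) * Real.cos (γ 0 + π / 4)) with hcdef
    have hc : 0 < c := by positivity
    have hbound : ∀ t ∈ Set.Ici (0 : ℝ), Fode (γ t) + c * γ t ≤ 0 := by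
      intro t ht
      obtain ⟨hx0, -⟩ := hmem t ht
      have hx8 : γ t < π / 8 := hlt8 t ht
      have hxle : γ t ≤ γ 0 := anti Set.self_mem_Ici ht ht
      have j1 : 2 / π * γ t ≤ Real.sin (γ t) := Real.mul_le_sin hx0.le (by linarith)
      have j2 : Real.sin (π / 4 - 2 * γ 0) ≤ Real.sin (π / 4 - 2 * γ t) :=
        Real.sin_le_sin_of_le_of_le_pi_div_two (by linarith) (by linarith) (by linarith)
      have j3 : Real.cos (γ 0 + π / 4) ≤ Real.cos (γ t + π / 4) :=
        Real.cos_le_cos_of_nonneg_of_le_pi (by linarith) (by linarith) (by linarith)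
      have n1 : 0 ≤ Real.sin (γ t) := le_trans (by positivity) j1
      have key : c * γ t ≤
          Real.sin (γ t) * Real.sin (π / 4 - 2 * γ t) * Real.cos (γ t + π / 4) := by
        calc c * γ t
            = (2 / π * γ t) * (Real.sin (π / 4 - 2 * γ 0) * Real.cos (γ 0 + π / 4)) := by
              rw [hcdef]; ring
          _ ≤ Real.sin (γ t) * (Real.sin (π / 4 - 2 * γ t) * Real.cos (γ t + π / 4)) := by
              apply mul_le_mul j1
                (mul_le_mul j2 j3 hs3.le (le_trans hs2.le j2))
                (by positivity) n1
          _ = Real.sin (γ t) * Real.sin (π / 4 - 2 * γ t) * Real.cos (γ t + π / 4) := by ring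
      rw [Fode]
      linarith
    have decay := exp_decay_aux hF hbound
    refine ⟨anti, ?_, ⟨c, hc, decay⟩⟩
    exact tendsto_of_tendsto_of_tendsto_of_le_of_le' tendsto_const_nhds (exp_tendsto_aux hc (γ 0))
      ((Filter.eventually_ge_atTop 0).mono fun t ht => (hmem t ht).1.le)
      ((Filter.eventually_ge_atTop 0).mono fun t ht => decay t ht)
  · -- case (b)
    intro hbgt
    have hb8 : ∀ t ∈ Set.Ici (0 : ℝ), γ t ≠ π / 8 := fun t ht h =>
      absurd (backward_eq hF Fode_abs8 ht h) (ne_of_gt hbgt)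
    have hgt8 : ∀ t ∈ Set.Ici (0 : ℝ), π / 8 < γ t := by
      intro t ht
      by_contra h
      push_neg at h
      have hsub : Set.Icc (0 : ℝ) t ⊆ Set.Ici 0 := fun x hx => hx.1
      obtain ⟨s, hs, hgs⟩ := intermediate_value_Icc' ht (hcont.mono hsub)
        (Set.mem_Icc.mpr ⟨h, hbgt.le⟩)
      exact hb8 s (hsub hs) hgs
    have hss : ∀ x : ℝ, Real.sin (π / 4 - 2 * x) = -Real.sin (2 * x - π / 4) := by
      intro x
      rw [← Real.sin_neg]
      ring_nf
    have hsign : ∀ x : ℝ, π / 8 < x → x < π / 4 → 0 ≤ Fode x := by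
      intro x hx8 hx4
      have s1 : 0 ≤ Real.sin x :=
        Real.sin_nonneg_of_nonneg_of_le_pi (by linarith) (by linarith)
      have s2 : 0 ≤ Real.sin (2 * x - π / 4) :=
        Real.sin_nonneg_of_nonneg_of_le_pi (by linarith) (by linarith)
      have s3 : 0 ≤ Real.cos (x + π / 4) :=
        (Real.cos_pos_of_mem_Ioo ⟨by linarith, by linarith⟩).le
      rw [Fode, hss]
      nlinarith [mul_nonneg (mul_nonneg s1 s2) s3]
    have mono : MonotoneOn γ (Set.Ici (0 : ℝ)) :=
      monotoneOn_aux hF (fun t ht => hsign _ (hgt8 t ht) (hmem t ht).2)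
    have hs1 : 0 < Real.sin (γ 0) := Real.sin_pos_of_pos_of_lt_pi h0 (by linarith)
    have hs2 : 0 < Real.sin (2 * γ 0 - π / 4) :=
      Real.sin_pos_of_pos_of_lt_pi (by linarith) (by linarith)
    set c : ℝ := 2 / π * (Real.sin (γ 0) * Real.sin (2 * γ 0 - π / 4)) with hcdef
    have hc : 0 < c := by positivity
    have hf : ∀ t ∈ Set.Ici (0 : ℝ), HasDerivWithinAt (fun t => π / 4 - γ t)
        (-(Fode (γ t))) (Set.Ici (0 : ℝ)) t := fun t ht => (hF t ht).const_sub (π / 4)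
    have hbound : ∀ t ∈ Set.Ici (0 : ℝ), -(Fode (γ t)) + c * (π / 4 - γ t) ≤ 0 := by
      intro t ht
      obtain ⟨hx0, hx4⟩ := hmem t ht
      have hx8 : π / 8 < γ t := hgt8 t ht
      have hxge : γ 0 ≤ γ t := mono Set.self_mem_Ici ht ht
      have j1 : Real.sin (γ 0) ≤ Real.sin (γ t) :=
        Real.sin_le_sin_of_le_of_le_pi_div_two (by linarith) (by linarith) (by linarith)
      have j2 : Real.sin (2 * γ 0 - π / 4) ≤ Real.sin (2 * γ t - π / 4) :=
        Real.sin_le_sin_of_le_of_le_pi_div_two (by linarith) (by linarith) (by linarith)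
      have j3 : 2 / π * (π / 4 - γ t) ≤ Real.sin (π / 4 - γ t) :=
        Real.mul_le_sin (by linarith) (by linarith)
      have hcs : Real.sin (π / 4 - γ t) = Real.cos (γ t + π / 4) := by
        rw [← Real.sin_pi_div_two_sub]
        ring_nf
      have key : c * (π / 4 - γ t) ≤
          Real.sin (γ t) * Real.sin (2 * γ t - π / 4) * Real.cos (γ t + π / 4) := by
        calc c * (π / 4 - γ t)
            = (Real.sin (γ 0) * Real.sin (2 * γ 0 - π / 4)) * (2 / π * (π / 4 - γ t)) := by
              rw [hcdef]; ring
          _ ≤ (Real.sin (γ t) * Real.sin (2 * γ t - π / 4)) * Real.sin (π / 4 - γ t) := by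
              apply mul_le_mul
                (mul_le_mul j1 j2 hs2.le (le_trans hs1.le j1))
                j3 (mul_nonneg (by positivity : (0:ℝ) ≤ 2 / π) (by linarith))
              exact mul_nonneg (le_trans hs1.le j1) (le_trans hs2.le j2)
          _ = Real.sin (γ t) * Real.sin (2 * γ t - π / 4) * Real.cos (γ t + π / 4) := by
              rw [hcs]
      have hFe : -(Fode (γ t)) =
          -(Real.sin (γ t) * Real.sin (2 * γ t - π / 4) * Real.cos (γ t + π / 4)) := by
        rw [Fode, hss]
        ring
      rw [hFe]
      linarith
    have decay := exp_decay_aux hf hbound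
    have htend : Filter.Tendsto (fun t => π / 4 - γ t) Filter.atTop (nhds 0) := by
      apply tendsto_of_tendsto_of_tendsto_of_le_of_le' tendsto_const_nhds
        (exp_tendsto_aux hc (π / 4 - γ 0))
        ((Filter.eventually_ge_atTop 0).mono fun t ht => by linarith [(hmem t ht).2])
        ((Filter.eventually_ge_atTop 0).mono fun t ht => decay t ht)
    have := htend.const_sub (π / 4)
    simpa using this
  · -- case (c)
    intro hc t ht
    exact forward_eq hF Fode_abs8 le_rfl hc t ht
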